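/- arXiv:0907.1049 — 2 statements merged into one kernel-verified Lean document; each statement's English description precedes it below -/
import Mathlib

section
/- For every n ≥ 1 and every fixed-point-free involution π of {1,...,2n}, one has 0 ≤ r(π) ≤ n², where r(π) = n² − Σ_{i < π(i)} (π(i) − i − #{k : i < k < π(i), π(k) < i}). -/
open Finset

/-- Build a permutation from a self-inverse function (one-line notation, 0-indexed). -/
def invOfFun {N : ℕ} (f : Fin N → Fin N) (h : ∀ i, f (f i) = i) : Equiv.Perm (Fin N) :=
  ⟨f, f, h, h⟩

/-- The rank function r(π) = n² − Σ_{i<π(i)} (π(i) − i − #{k : i<k<π(i), π(k)<i}). -/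
def rk (n : ℕ) (π : Equiv.Perm (Fin (2*n))) : ℤ :=
  (n:ℤ)^2 - ∑ i : Fin (2*n), if (i:ℕ) < (π i : ℕ) then
    ((π i : ℕ) : ℤ) - ((i:ℕ) : ℤ) -
      ((univ.filter fun k : Fin (2*n) =>
        (i:ℕ) < (k:ℕ) ∧ (k:ℕ) < (π i : ℕ) ∧ (π k : ℕ) < (i:ℕ)).card : ℤ)
  else 0

/-- Bruhat order on permutations of Fin N, via the counting (Proctor/Ehresmann) criterion:
x ≤ y iff every prefix of x has at least as many values below any threshold as that of y. -/
def bruhatLE {N : ℕ} (x y : Equiv.Perm (Fin N)) : Prop :=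
  ∀ i k : Fin N, (univ.filter fun l : Fin N => l ≤ i ∧ (y l : ℕ) < (k:ℕ)).card ≤
    (univ.filter fun l : Fin N => l ≤ i ∧ (x l : ℕ) < (k:ℕ)).card

instance {N : ℕ} (x y : Equiv.Perm (Fin N)) : Decidable (bruhatLE x y) := by
  unfold bruhatLE; infer_instance

/-- `revLE μ π` : μ ≤ π in the *reverse* Bruhat order. -/
def revLE {N : ℕ} (μ π : Equiv.Perm (Fin N)) : Prop := bruhatLE π μ

instance {N : ℕ} (x y : Equiv.Perm (Fin N)) : Decidable (revLE x y) := by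
  unfold revLE; infer_instance

/-- Involution-pattern inclusion: π includes pattern μ via a strictly increasing,
π-stable family of indices realizing the same relative order. -/
def includesPattern {N M : ℕ} (π : Equiv.Perm (Fin N)) (μ : Equiv.Perm (Fin M)) : Prop :=
  ∃ ι : Fin M → Fin N, StrictMono ι ∧ (∀ j, ∃ k, π (ι j) = ι k) ∧
    ∀ j k, (π (ι j) : ℕ) < (π (ι k) : ℕ) ↔ (μ j : ℕ) < (μ k : ℕ)

def auxC {N : ℕ} (π : Equiv.Perm (Fin N)) (i : Fin N) : ℕ :=
  (univ.filter fun k : Fin N =>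
    (i:ℕ) < (k:ℕ) ∧ (k:ℕ) < (π i : ℕ) ∧ (π k : ℕ) < (i:ℕ)).card

def auxD {N : ℕ} (π : Equiv.Perm (Fin N)) (i : Fin N) : ℕ :=
  (univ.filter fun k : Fin N =>
    (i:ℕ) < (k:ℕ) ∧ (k:ℕ) < (π i : ℕ) ∧ (i:ℕ) < (π k : ℕ)).card

def auxO {N : ℕ} (π : Equiv.Perm (Fin N)) : Finset (Fin N) :=
  univ.filter fun i => (i:ℕ) < (π i : ℕ)

lemma auxO_card {n : ℕ} (π : Equiv.Perm (Fin (2*n)))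
    (hinv : ∀ i, π (π i) = i) (hfix : ∀ i, π i ≠ i) : (auxO π).card = n := by
  have hvalne : ∀ i : Fin (2*n), (π i : ℕ) ≠ (i:ℕ) := fun i h => hfix i (Fin.ext h)
  have h1 : (auxO π).card + (univ.filter fun i : Fin (2*n) => ¬ (i:ℕ) < (π i : ℕ)).card
      = 2*n := by
    have := Finset.card_filter_add_card_filter_not
      (s := (univ : Finset (Fin (2*n)))) (p := fun i => (i:ℕ) < (π i : ℕ))
    simpa [auxO] using this
  have h2 : (univ.filter fun i : Fin (2*n) => ¬ (i:ℕ) < (π i : ℕ)).card = (auxO π).card := by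
    apply Finset.card_bij (fun j _ => π j)
    · intro a ha
      simp only [auxO, mem_filter, mem_univ, true_and] at ha ⊢
      rw [hinv a]
      have := hvalne a
      omega
    · intro a _ b _ hab
      exact π.injective hab
    · intro b hb
      simp only [auxO, mem_filter, mem_univ, true_and] at hb ⊢
      exact ⟨π b, by rw [hinv b]; omega, hinv b⟩
  omega

lemma aux_term {n : ℕ} (π : Equiv.Perm (Fin (2*n)))
    (hinv : ∀ i, π (π i) = i) (i : Fin (2*n)) (hi : (i:ℕ) < (π i : ℕ)) :
    (i:ℕ) + 1 + auxC π i + auxD π i = (π i : ℕ) := by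
  have hIcard : (univ.filter fun k : Fin (2*n) =>
      (i:ℕ) < (k:ℕ) ∧ (k:ℕ) < (π i : ℕ)).card = (π i : ℕ) - (i:ℕ) - 1 := by
    have he : (univ.filter fun k : Fin (2*n) =>
        (i:ℕ) < (k:ℕ) ∧ (k:ℕ) < (π i : ℕ)) = Finset.Ioo i (π i) := by
      ext k
      simp only [mem_filter, mem_univ, true_and, Finset.mem_Ioo, Fin.lt_def]
    rw [he, Fin.card_Ioo]
  have hc : ((univ.filter fun k : Fin (2*n) =>
      (i:ℕ) < (k:ℕ) ∧ (k:ℕ) < (π i : ℕ)).filter fun k => (π k : ℕ) < (i:ℕ)).card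
      = auxC π i := by
    rw [Finset.filter_filter, auxC]
    congr 1
    ext k
    simp only [and_assoc]
  have hd : ((univ.filter fun k : Fin (2*n) =>
      (i:ℕ) < (k:ℕ) ∧ (k:ℕ) < (π i : ℕ)).filter fun k => ¬ (π k : ℕ) < (i:ℕ)).card
      = auxD π i := by
    rw [Finset.filter_filter, auxD]
    congr 1
    ext k
    simp only [mem_filter, mem_univ, true_and, and_assoc, not_lt]
    constructor
    · rintro ⟨h1, h2, h3⟩
      refine ⟨h1, h2, lt_of_le_of_ne h3 ?_⟩
      intro he
      have hki : π k = i := Fin.ext he.symm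
      have : k = π i := by rw [← hki, hinv k]
      rw [this] at h2
      omega
    · rintro ⟨h1, h2, h3⟩
      exact ⟨h1, h2, le_of_lt h3⟩
  have := Finset.card_filter_add_card_filter_not
    (s := univ.filter fun k : Fin (2*n) => (i:ℕ) < (k:ℕ) ∧ (k:ℕ) < (π i : ℕ))
    (p := fun k => (π k : ℕ) < (i:ℕ))
  rw [hc, hd, hIcard] at this
  omega

lemma aux_dsum {n : ℕ} (π : Equiv.Perm (Fin (2*n)))
    (hinv : ∀ i, π (π i) = i) (hfix : ∀ i, π i ≠ i) :
    ∑ i ∈ auxO π, auxD π i ≤ n*n - n := by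
  have hvalne : ∀ i : Fin (2*n), (π i : ℕ) ≠ (i:ℕ) := fun i h => hfix i (Fin.ext h)
  have hOcard := auxO_card π hinv hfix
  have hSg : ((auxO π).sigma fun i => univ.filter fun k : Fin (2*n) =>
      (i:ℕ) < (k:ℕ) ∧ (k:ℕ) < (π i : ℕ) ∧ (i:ℕ) < (π k : ℕ)).card
      = ∑ i ∈ auxO π, auxD π i := by
    rw [Finset.card_sigma]; rfl
  set T : Finset (Fin (2*n) × Fin (2*n)) :=
    (auxO π ×ˢ auxO π).filter fun p => ¬ p.1 = p.2 with hTdef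
  have hTcard : T.card = n*n - n := by
    have h1 : ((auxO π ×ˢ auxO π).filter
        fun p : Fin (2*n) × Fin (2*n) => p.1 = p.2).card + T.card = n*n := by
      have := Finset.card_filter_add_card_filter_not
        (s := auxO π ×ˢ auxO π) (p := fun p : Fin (2*n) × Fin (2*n) => p.1 = p.2)
      rwa [Finset.card_product, hOcard] at this
    have h2 : ((auxO π ×ˢ auxO π).filter
        fun p : Fin (2*n) × Fin (2*n) => p.1 = p.2).card = (auxO π).card := by
      apply Finset.card_bij (fun p _ => p.1)
      · intro p hp
        simp only [Finset.mem_filter, Finset.mem_product] at hp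
        exact hp.1.1
      · intro p hp q hq hpq
        simp only [Finset.mem_filter, Finset.mem_product] at hp hq
        exact Prod.ext hpq (by rw [← hp.2, ← hq.2, hpq])
      · intro b hb
        exact ⟨(b, b), by simp [Finset.mem_filter, Finset.mem_product, hb], rfl⟩
    omega
  rw [← hSg, ← hTcard]
  apply Finset.card_le_card_of_injOn
    (fun p => if (p.2:ℕ) < (π p.2 : ℕ) then (p.1, p.2) else (π p.2, p.1))
  · rintro ⟨i, k⟩ hp
    simp only [Finset.mem_coe, Finset.mem_sigma, Finset.mem_filter, mem_univ, true_and] at hp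
    obtain ⟨hiO, h1, h2, h3⟩ := hp
    have hi : (i:ℕ) < (π i : ℕ) := by simpa [auxO] using hiO
    by_cases hk : (k:ℕ) < (π k : ℕ)
    · simp only [hk, if_true, hTdef, Finset.mem_coe, Finset.mem_filter, Finset.mem_product]
      refine ⟨⟨hiO, ?_⟩, ?_⟩
      · simp only [auxO, mem_filter, mem_univ, true_and]
        exact hk
      · intro he
        have := congrArg Fin.val he
        omega
    · simp only [hk, if_false, hTdef, Finset.mem_coe, Finset.mem_filter, Finset.mem_product]
      have hkk : (π k : ℕ) < (k:ℕ) := by have := hvalne k; omega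
      refine ⟨⟨?_, hiO⟩, ?_⟩
      · simp only [auxO, mem_filter, mem_univ, true_and]
        rw [hinv k]; exact hkk
      · intro he
        have h5 : k = π i := by rw [← he, hinv k]
        have := congrArg Fin.val h5
        omega
  · rintro ⟨i, k⟩ hp ⟨i', k'⟩ hq hpq
    simp only [Finset.coe_sigma, Set.mem_sigma_iff, Finset.mem_coe, Finset.mem_filter,
      mem_univ, true_and] at hp hq
    obtain ⟨hiO, h1, h2, h3⟩ := hp
    obtain ⟨hiO', h1', h2', h3'⟩ := hq
    simp only at hpq
    by_cases hk : (k:ℕ) < (π k : ℕ) <;> by_cases hk' : (k':ℕ) < (π k' : ℕ) <;>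
      simp only [hk, hk', if_true, if_false, Prod.mk.injEq] at hpq
    · obtain ⟨e1, e2⟩ := hpq
      subst e1; subst e2; rfl
    · obtain ⟨e1, e2⟩ := hpq
      have v1 := congrArg Fin.val e1
      have v2 := congrArg Fin.val e2
      omega
    · obtain ⟨e1, e2⟩ := hpq
      have v1 := congrArg Fin.val e1
      have v2 := congrArg Fin.val e2
      omega
    · obtain ⟨e1, e2⟩ := hpq
      have : k = k' := π.injective e1
      subst this; subst e2; rfl

/-- For every n ≥ 1, every fixed-point-free involution π of {1,...,2n} satisfies 0 ≤ r(π) ≤ n². -/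
theorem stmt_5 : ∀ n : ℕ, 1 ≤ n → ∀ π : Equiv.Perm (Fin (2*n)),
    (∀ i, π (π i) = i) → (∀ i, π i ≠ i) →
    0 ≤ rk n π ∧ rk n π ≤ (n:ℤ)^2 := by
  intro n hn π hinv hfix
  have hOcard := auxO_card π hinv hfix
  have hdsum := aux_dsum π hinv hfix
  have hS : (∑ i : Fin (2*n), if (i:ℕ) < (π i : ℕ) then
      ((π i : ℕ) : ℤ) - ((i:ℕ) : ℤ) -
        ((univ.filter fun k : Fin (2*n) =>
          (i:ℕ) < (k:ℕ) ∧ (k:ℕ) < (π i : ℕ) ∧ (π k : ℕ) < (i:ℕ)).card : ℤ)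
    else 0) = (n : ℤ) + (∑ i ∈ auxO π, auxD π i : ℕ) := by
    rw [← Finset.sum_filter]
    show (∑ i ∈ auxO π, (((π i : ℕ) : ℤ) - ((i:ℕ) : ℤ) -
        ((univ.filter fun k : Fin (2*n) =>
          (i:ℕ) < (k:ℕ) ∧ (k:ℕ) < (π i : ℕ) ∧ (π k : ℕ) < (i:ℕ)).card : ℤ)))
      = (n : ℤ) + (∑ i ∈ auxO π, auxD π i : ℕ)
    have : ∀ i ∈ auxO π, (((π i : ℕ) : ℤ) - ((i:ℕ) : ℤ) -
        ((univ.filter fun k : Fin (2*n) =>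
          (i:ℕ) < (k:ℕ) ∧ (k:ℕ) < (π i : ℕ) ∧ (π k : ℕ) < (i:ℕ)).card : ℤ))
        = 1 + (auxD π i : ℤ) := by
      intro i hi
      have hio : (i:ℕ) < (π i : ℕ) := by simpa [auxO] using hi
      have := aux_term π hinv i hio
      have hcc : (univ.filter fun k : Fin (2*n) =>
          (i:ℕ) < (k:ℕ) ∧ (k:ℕ) < (π i : ℕ) ∧ (π k : ℕ) < (i:ℕ)).card = auxC π i := rfl
      rw [hcc]
      push_cast
      omega
    rw [Finset.sum_congr rfl this, Finset.sum_add_distrib, Finset.sum_const, hOcard]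
    push_cast
    ring
  unfold rk
  rw [hS]
  have h1 : ((∑ i ∈ auxO π, auxD π i : ℕ) : ℤ) ≤ (n:ℤ)*n - n := by
    have hle : n ≤ n*n := Nat.le_mul_of_pos_left n (by omega)
    have := Nat.cast_le (α := ℤ) |>.mpr hdsum
    rw [Nat.cast_sub hle] at this
    push_cast at this ⊢
    linarith
  have h2 : (0:ℤ) ≤ ((∑ i ∈ auxO π, auxD π i : ℕ) : ℤ) := Int.ofNat_nonneg _
  constructor <;> nlinarith [sq_nonneg ((n:ℤ))]
end

section
/- Let μ ≤ π be fixed-point-free involutions of {1,...,2n} (reverse Bruhat order) both flipping indices a < d; let μ', π' be obtained by deleting positions a, d and renumbering. If the number of transpositions t' with t'μ't' ≠ μ' and μ' ≤ t'μ't' ≤ π' exceeds r(π') − r(μ'), then the number of transpositions t with tμt ≠ μ and μ ≤ tμt ≤ π exceeds r(π) − r(μ). -/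
open Finset

/-- The degree of μ in the Bruhat graph BG_{μ,π}: the number of transpositions t with
tμt ≠ μ and μ ≤ tμt ≤ π in reverse Bruhat order. -/
def deg {N : ℕ} (μ π : Equiv.Perm (Fin N)) : ℕ :=
  (univ.filter fun p : Fin N × Fin N => p.1 < p.2 ∧
    Equiv.swap p.1 p.2 * μ * Equiv.swap p.1 p.2 ≠ μ ∧
    revLE μ (Equiv.swap p.1 p.2 * μ * Equiv.swap p.1 p.2) ∧
    revLE (Equiv.swap p.1 p.2 * μ * Equiv.swap p.1 p.2) π).card

namespace Stmt9

lemma card_lt_fin (m c : ℕ) :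
    ((univ : Finset (Fin m)).filter fun j : Fin m => (j:ℕ) < c).card = min c m := by
  rw [← Finset.card_range (min c m)]
  apply Finset.card_bij (fun (j : Fin m) _ => (j:ℕ))
  · intro j hj
    simp only [mem_filter] at hj
    exact Finset.mem_range.2 (lt_min hj.2 j.2)
  · intro j _ j' _ h
    exact Fin.val_injective h
  · intro b hb
    simp only [Finset.mem_range, lt_min_iff] at hb
    exact ⟨⟨b, hb.2⟩, by simp [hb.1], rfl⟩

def cnt {N : ℕ} (x : Equiv.Perm (Fin N)) (i k : ℕ) : ℕ :=
  ((univ : Finset (Fin N)).filter fun l : Fin N => (l:ℕ) < i ∧ (x l : ℕ) < k).card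

lemma cnt_mono_i {N : ℕ} (x : Equiv.Perm (Fin N)) {i i' : ℕ} (h : i ≤ i') (k : ℕ) :
    cnt x i k ≤ cnt x i' k := by
  apply Finset.card_le_card
  intro l hl
  simp only [mem_filter] at hl ⊢
  exact ⟨hl.1, lt_of_lt_of_le hl.2.1 h, hl.2.2⟩

lemma cnt_mono_k {N : ℕ} (x : Equiv.Perm (Fin N)) (i : ℕ) {k k' : ℕ} (h : k ≤ k') :
    cnt x i k ≤ cnt x i k' := by
  apply Finset.card_le_card
  intro l hl
  simp only [mem_filter] at hl ⊢
  exact ⟨hl.1, hl.2.1, lt_of_lt_of_le hl.2.2 h⟩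

lemma bruhat_iff_cnt {N : ℕ} (x y : Equiv.Perm (Fin N)) :
    bruhatLE x y ↔ ∀ i k : ℕ, cnt y i k ≤ cnt x i k := by
  constructor
  · intro h i k
    rcases Nat.eq_zero_or_pos i with hi | hi
    · subst hi
      simp [cnt]
    rcases Nat.eq_zero_or_pos N with hN | hN
    · subst hN
      simp [cnt, Finset.eq_empty_of_isEmpty]
    rcases lt_or_ge k N with hk | hk
    · have hi' : min (i-1) (N-1) < N := by omega
      have := h ⟨min (i-1) (N-1), hi'⟩ ⟨k, hk⟩
      have e1 : ∀ z : Equiv.Perm (Fin N),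
          (univ.filter fun l : Fin N => l ≤ (⟨min (i-1) (N-1), hi'⟩ : Fin N) ∧
            (z l : ℕ) < ((⟨k, hk⟩ : Fin N):ℕ)).card = cnt z i k := by
        intro z
        unfold cnt
        congr 1
        apply Finset.filter_congr
        intro l _
        rw [Fin.le_def]
        have := l.2
        constructor
        · intro h'; exact ⟨by simp only [] at h'; omega, h'.2⟩
        · intro h'; exact ⟨by simp only []; omega, h'.2⟩
      rw [e1 x, e1 y] at this
      exact this
    · have e2 : ∀ z : Equiv.Perm (Fin N), cnt z i k = min i N := by
        intro z
        unfold cnt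
        rw [← card_lt_fin N i]
        congr 1
        apply Finset.filter_congr
        intro l _
        have := (z l).2
        constructor
        · exact fun h' => h'.1
        · exact fun h' => ⟨h', by omega⟩
      rw [e2 x, e2 y]
  · intro h i k
    have e1 : ∀ z : Equiv.Perm (Fin N),
        (univ.filter fun l : Fin N => l ≤ i ∧ (z l : ℕ) < (k:ℕ)).card = cnt z ((i:ℕ)+1) (k:ℕ) := by
      intro z
      unfold cnt
      congr 1
      apply Finset.filter_congr
      intro l _
      rw [Fin.le_def]
      constructor <;> (intro h'; exact ⟨by omega, h'.2⟩)
    rw [e1 x, e1 y]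
    exact h _ _


lemma cnt_symm {N : ℕ} (x : Equiv.Perm (Fin N)) (hinv : ∀ l, x (x l) = l) (i k : ℕ) :
    cnt x i k = cnt x k i := by
  unfold cnt
  apply Finset.card_bij (fun l _ => x l)
  · intro l hl
    simp only [mem_filter] at hl ⊢
    exact ⟨Finset.mem_univ _, hl.2.2, by rw [hinv]; exact hl.2.1⟩
  · intro l _ l' _ h
    exact x.injective h
  · intro v hv
    simp only [mem_filter] at hv
    exact ⟨x v, by simp only [mem_filter]; exact ⟨Finset.mem_univ _, hv.2.2, by rw [hinv]; exact hv.2.1⟩, hinv v⟩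

lemma cnt_trunc {N : ℕ} (z : Equiv.Perm (Fin N)) (i k : ℕ) :
    cnt z i k = cnt z (min i N) (min k N) := by
  unfold cnt
  congr 1
  apply Finset.filter_congr
  intro l _
  have h1 := l.2
  have h2 := (z l).2
  constructor
  · intro h; exact ⟨by omega, by omega⟩
  · intro h; exact ⟨by omega, by omega⟩

lemma card_between (m lo hi : ℕ) (hhi : hi ≤ m) :
    ((univ : Finset (Fin m)).filter fun v : Fin m => lo < (v:ℕ) ∧ (v:ℕ) < hi).card
      = hi - (lo+1) := by
  classical
  have hsplit := Finset.card_filter_add_card_filter_not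
    (s := (univ : Finset (Fin m)).filter fun v : Fin m => (v:ℕ) < hi)
    (p := fun v : Fin m => (v:ℕ) ≤ lo)
  rw [Finset.filter_filter, Finset.filter_filter] at hsplit
  have e1 : ((univ : Finset (Fin m)).filter fun v : Fin m => (v:ℕ) < hi ∧ (v:ℕ) ≤ lo)
      = (univ : Finset (Fin m)).filter fun v : Fin m => (v:ℕ) < min hi (lo+1) := by
    apply Finset.filter_congr
    intro v _
    constructor
    · intro h; omega
    · intro h; omega
  have e2 : ((univ : Finset (Fin m)).filter fun v : Fin m => (v:ℕ) < hi ∧ ¬(v:ℕ) ≤ lo)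
      = (univ : Finset (Fin m)).filter fun v : Fin m => lo < (v:ℕ) ∧ (v:ℕ) < hi := by
    apply Finset.filter_congr
    intro v _
    constructor
    · intro h; exact ⟨by omega, h.1⟩
    · intro h; exact ⟨h.2, by omega⟩
  rw [e1, e2, card_lt_fin, card_lt_fin] at hsplit
  omega

def cterm {N : ℕ} (x : Equiv.Perm (Fin N)) (i : Fin N) : ℕ :=
  ((univ : Finset (Fin N)).filter fun k : Fin N =>
    (i:ℕ) < (k:ℕ) ∧ (k:ℕ) < (x i : ℕ) ∧ (x k : ℕ) < (i:ℕ)).card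

def Ssum {N : ℕ} (x : Equiv.Perm (Fin N)) : ℤ :=
  ∑ i : Fin N, if (i:ℕ) < (x i : ℕ) then
    ((x i : ℕ) : ℤ) - ((i:ℕ) : ℤ) - (cterm x i : ℤ) else 0

section trans

variable {n : ℕ} (a d : Fin (2*(n+1))) (ι : Fin (2*n) → Fin (2*(n+1)))

lemma iota_surj (hmono : StrictMono ι) (havoid : ∀ j, ι j ≠ a ∧ ι j ≠ d)
    (had : a < d) : ∀ v : Fin (2*(n+1)), v ≠ a → v ≠ d → ∃ j, ι j = v := by
  intro v hva hvd
  have hinj : Function.Injective ι := hmono.injective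
  have hsub : (univ : Finset (Fin (2*n))).image ι ⊆ (univ : Finset (Fin (2*(n+1)))) \ {a, d} := by
    intro w hw
    simp only [Finset.mem_image] at hw
    obtain ⟨j, _, rfl⟩ := hw
    simp only [Finset.mem_sdiff, Finset.mem_univ, Finset.mem_insert, Finset.mem_singleton,
      true_and]
    push_neg
    exact havoid j
  have hcard : ((univ : Finset (Fin (2*(n+1)))) \ {a, d}).card = 2*n := by
    rw [Finset.card_sdiff_of_subset (by intro w hw; exact Finset.mem_univ w)]
    rw [Finset.card_univ, Fintype.card_fin, Finset.card_insert_of_notMem (by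
      simp only [Finset.mem_singleton]; exact Fin.ne_of_lt had), Finset.card_singleton]
    omega
  have himg : (univ : Finset (Fin (2*n))).image ι = (univ : Finset (Fin (2*(n+1)))) \ {a, d} := by
    apply Finset.eq_of_subset_of_card_le hsub
    rw [hcard, Finset.card_image_of_injective _ hinj, Finset.card_univ, Fintype.card_fin]
  have hv : v ∈ (univ : Finset (Fin (2*(n+1)))) \ {a, d} := by
    simp only [Finset.mem_sdiff, Finset.mem_univ, Finset.mem_insert, Finset.mem_singleton,
      true_and]
    push_neg
    exact ⟨hva, hvd⟩
  rw [← himg] at hv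
  simp only [Finset.mem_image] at hv
  obtain ⟨j, _, hj⟩ := hv
  exact ⟨j, hj⟩

lemma card_transfer (hmono : StrictMono ι) (havoid : ∀ j, ι j ≠ a ∧ ι j ≠ d)
    (had : a < d) (Q : Fin (2*(n+1)) → Prop) [DecidablePred Q]
    (hQ : ∀ v, Q v → v ≠ a ∧ v ≠ d) :
    ((univ : Finset (Fin (2*n))).filter fun j => Q (ι j)).card
      = ((univ : Finset (Fin (2*(n+1)))).filter Q).card := by
  apply Finset.card_bij (fun j _ => ι j)
  · intro j hj
    simp only [mem_filter] at hj ⊢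
    exact ⟨Finset.mem_univ _, hj.2⟩
  · intro j _ j' _ h
    exact hmono.injective h
  · intro v hv
    simp only [mem_filter] at hv
    obtain ⟨j, hj⟩ := iota_surj a d ι hmono havoid had v (hQ v hv.2).1 (hQ v hv.2).2
    exact ⟨j, by simp only [mem_filter]; exact ⟨Finset.mem_univ _, by rw [hj]; exact hv.2⟩, hj⟩

/-- number of ι-values strictly below K -/
def below (K : ℕ) : ℕ := ((univ : Finset (Fin (2*n))).filter fun j => (ι j : ℕ) < K).card

lemma iota_lt_iff (hmono : StrictMono ι) (m : Fin (2*n)) (K : ℕ) :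
    (ι m : ℕ) < K ↔ (m:ℕ) < below ι K := by
  constructor
  · intro h
    have hsub : ((univ : Finset (Fin (2*n))).filter fun j : Fin (2*n) => (j:ℕ) < (m:ℕ)+1)
        ⊆ (univ : Finset (Fin (2*n))).filter fun j => (ι j : ℕ) < K := by
      intro j hj
      simp only [mem_filter] at hj ⊢
      refine ⟨Finset.mem_univ _, ?_⟩
      have : j ≤ m := by
        rw [Fin.le_def]; omega
      exact lt_of_le_of_lt (Fin.le_def.1 (hmono.monotone this)) h
    have := Finset.card_le_card hsub
    rw [card_lt_fin] at this
    unfold below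
    have hm := m.2
    omega
  · intro h
    by_contra hc
    push_neg at hc
    have hsub : ((univ : Finset (Fin (2*n))).filter fun j => (ι j : ℕ) < K)
        ⊆ (univ : Finset (Fin (2*n))).filter fun j : Fin (2*n) => (j:ℕ) < (m:ℕ) := by
      intro j hj
      simp only [mem_filter] at hj ⊢
      refine ⟨Finset.mem_univ _, ?_⟩
      have : ι j < ι m := by
        rw [Fin.lt_def]; omega
      exact hmono.lt_iff_lt.1 this
    have := Finset.card_le_card hsub
    rw [card_lt_fin] at this
    unfold below at h
    have hm := m.2
    omega

lemma cnt_transfer (hmono : StrictMono ι) (havoid : ∀ j, ι j ≠ a ∧ ι j ≠ d)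
    (had : a < d) (x : Equiv.Perm (Fin (2*(n+1)))) (x' : Equiv.Perm (Fin (2*n)))
    (hcomp : ∀ j, x (ι j) = ι (x' j)) (hxa : x a = d) (hxd : x d = a) (i k : ℕ) :
    cnt x i k = cnt x' (below ι i) (below ι k)
      + ((if (a:ℕ) < i ∧ (d:ℕ) < k then 1 else 0)
        + (if (d:ℕ) < i ∧ (a:ℕ) < k then 1 else 0)) := by
  classical
  have hsplit := Finset.card_filter_add_card_filter_not
    (s := (univ : Finset (Fin (2*(n+1)))).filter fun l : Fin (2*(n+1)) => (l:ℕ) < i ∧ (x l : ℕ) < k)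
    (p := fun l => l ≠ a ∧ l ≠ d)
  have e1 : (((univ : Finset (Fin (2*(n+1)))).filter fun l : Fin (2*(n+1)) => (l:ℕ) < i ∧ (x l : ℕ) < k).filter
      fun l => l ≠ a ∧ l ≠ d).card = cnt x' (below ι i) (below ι k) := by
    rw [Finset.filter_filter]
    rw [← card_transfer a d ι hmono havoid had
      (fun l : Fin (2*(n+1)) => ((l:ℕ) < i ∧ (x l : ℕ) < k) ∧ l ≠ a ∧ l ≠ d) (fun v hv => hv.2)]
    unfold cnt
    congr 1
    apply Finset.filter_congr
    intro j _
    constructor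
    · intro hj
      refine ⟨(iota_lt_iff ι hmono j i).1 hj.1.1, ?_⟩
      have := hj.1.2
      rw [hcomp j] at this
      exact (iota_lt_iff ι hmono (x' j) k).1 this
    · intro hj
      refine ⟨⟨(iota_lt_iff ι hmono j i).2 hj.1, ?_⟩, havoid j⟩
      rw [hcomp j]
      exact (iota_lt_iff ι hmono (x' j) k).2 hj.2
  have e2 : (((univ : Finset (Fin (2*(n+1)))).filter fun l : Fin (2*(n+1)) => (l:ℕ) < i ∧ (x l : ℕ) < k).filter
      fun l => ¬(l ≠ a ∧ l ≠ d)).card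
      = ((if (a:ℕ) < i ∧ (d:ℕ) < k then 1 else 0)
        + (if (d:ℕ) < i ∧ (a:ℕ) < k then 1 else 0)) := by
    rw [Finset.filter_filter]
    have hset : ((univ : Finset (Fin (2*(n+1)))).filter
        fun l : Fin (2*(n+1)) => ((l:ℕ) < i ∧ (x l : ℕ) < k) ∧ ¬(l ≠ a ∧ l ≠ d))
        = ({a, d} : Finset (Fin (2*(n+1)))).filter fun l : Fin (2*(n+1)) => (l:ℕ) < i ∧ (x l : ℕ) < k := by
      ext l
      simp only [mem_filter, Finset.mem_univ, true_and, Finset.mem_insert,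
        Finset.mem_singleton, not_and, not_not]
      tauto
    rw [hset, Finset.filter_insert, Finset.filter_singleton, hxa, hxd]
    have hne : a ≠ d := Fin.ne_of_lt had
    split_ifs with h1 h2 h2
    · rw [Finset.card_insert_of_notMem (by simp [hne])]
      simp
    · simp
    · simp
    · simp
  rw [← e1, ← e2]
  unfold cnt
  exact hsplit.symm


lemma below_realize (hmono : StrictMono ι) (c : ℕ) (hc : c ≤ 2*n) :
    ∃ i : ℕ, below ι i = c := by
  rcases Nat.eq_zero_or_pos c with h0 | h0
  · refine ⟨0, ?_⟩
    subst h0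
    unfold below
    simp
  · refine ⟨(ι ⟨c-1, by omega⟩ : ℕ) + 1, ?_⟩
    unfold below
    have : ((univ : Finset (Fin (2*n))).filter fun j => (ι j : ℕ) < (ι ⟨c-1, by omega⟩ : ℕ) + 1)
        = (univ : Finset (Fin (2*n))).filter fun j : Fin (2*n) => (j:ℕ) < c := by
      apply Finset.filter_congr
      intro j _
      have hle : (ι j : ℕ) ≤ (ι ⟨c-1, by omega⟩ : ℕ) ↔ j ≤ (⟨c-1, by omega⟩ : Fin (2*n)) := by
        constructor
        · intro h; exact hmono.le_iff_le.1 (Fin.le_def.2 h)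
        · intro h; exact Fin.le_def.1 (hmono.le_iff_le.2 h)
      rw [Fin.le_def] at hle
      simp only [Fin.val_mk] at hle
      constructor
      · intro h
        have := hle.1 (by omega)
        omega
      · intro h
        have := hle.2 (by omega)
        omega
    rw [this, card_lt_fin]
    omega

lemma bruhat_transfer (hmono : StrictMono ι) (havoid : ∀ j, ι j ≠ a ∧ ι j ≠ d)
    (had : a < d) (x y : Equiv.Perm (Fin (2*(n+1)))) (x' y' : Equiv.Perm (Fin (2*n)))
    (hcompx : ∀ j, x (ι j) = ι (x' j)) (hxa : x a = d) (hxd : x d = a)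
    (hcompy : ∀ j, y (ι j) = ι (y' j)) (hya : y a = d) (hyd : y d = a) :
    bruhatLE x y ↔ bruhatLE x' y' := by
  rw [bruhat_iff_cnt, bruhat_iff_cnt]
  constructor
  · intro h i' k'
    rw [cnt_trunc y' i' k', cnt_trunc x' i' k']
    obtain ⟨i, hi⟩ := below_realize ι hmono (min i' (2*n)) (by omega)
    obtain ⟨k, hk⟩ := below_realize ι hmono (min k' (2*n)) (by omega)
    have hx := cnt_transfer a d ι hmono havoid had x x' hcompx hxa hxd i k
    have hy := cnt_transfer a d ι hmono havoid had y y' hcompy hya hyd i k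
    rw [hi, hk] at hx hy
    have := h i k
    omega
  · intro h i k
    have hx := cnt_transfer a d ι hmono havoid had x x' hcompx hxa hxd i k
    have hy := cnt_transfer a d ι hmono havoid had y y' hcompy hya hyd i k
    have := h (below ι i) (below ι k)
    omega

lemma card_pair_part (had : a < d) (P : Fin (2*(n+1)) → Prop) [DecidablePred P] :
    ((univ : Finset (Fin (2*(n+1)))).filter fun l => P l ∧ ¬(l ≠ a ∧ l ≠ d)).card
      = (if P a then 1 else 0) + (if P d then 1 else 0) := by
  classical
  have hset : ((univ : Finset (Fin (2*(n+1)))).filter fun l => P l ∧ ¬(l ≠ a ∧ l ≠ d))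
      = ({a, d} : Finset (Fin (2*(n+1)))).filter P := by
    ext l
    simp only [mem_filter, Finset.mem_univ, true_and, Finset.mem_insert,
      Finset.mem_singleton, not_and, not_not]
    tauto
  rw [hset, Finset.filter_insert, Finset.filter_singleton]
  have hne : a ≠ d := Fin.ne_of_lt had
  split_ifs with h1 h2 h2
  · rw [Finset.card_insert_of_notMem (by simp [hne])]
    simp
  · simp
  · simp
  · simp

lemma card_split (hmono : StrictMono ι) (havoid : ∀ j, ι j ≠ a ∧ ι j ≠ d) (had : a < d)
    (P : Fin (2*(n+1)) → Prop) [DecidablePred P] :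
    ((univ : Finset (Fin (2*(n+1)))).filter P).card
      = ((univ : Finset (Fin (2*n))).filter fun j => P (ι j)).card
        + ((if P a then 1 else 0) + (if P d then 1 else 0)) := by
  classical
  have hsplit := Finset.card_filter_add_card_filter_not
    (s := (univ : Finset (Fin (2*(n+1)))).filter P) (p := fun l => l ≠ a ∧ l ≠ d)
  rw [Finset.filter_filter, Finset.filter_filter] at hsplit
  have e1 : ((univ : Finset (Fin (2*(n+1)))).filter fun l => P l ∧ l ≠ a ∧ l ≠ d).card
      = ((univ : Finset (Fin (2*n))).filter fun j => P (ι j)).card := by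
    rw [← card_transfer a d ι hmono havoid had
      (fun l => P l ∧ l ≠ a ∧ l ≠ d) (fun v hv => hv.2)]
    congr 1
    apply Finset.filter_congr
    intro j _
    constructor
    · intro hj; exact hj.1
    · intro hj; exact ⟨hj, havoid j⟩
  rw [e1, card_pair_part a d had P] at hsplit
  omega

def Cb (x : Equiv.Perm (Fin (2*(n+1)))) : ℕ :=
  ((univ : Finset (Fin (2*(n+1)))).filter fun p : Fin (2*(n+1)) =>
    (p:ℕ) < (a:ℕ) ∧ (d:ℕ) < (x p : ℕ)).card

lemma Ssum_delete (hmono : StrictMono ι) (havoid : ∀ j, ι j ≠ a ∧ ι j ≠ d) (had : a < d)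
    (x : Equiv.Perm (Fin (2*(n+1)))) (x' : Equiv.Perm (Fin (2*n)))
    (hxinv : ∀ l, x (x l) = l)
    (hcomp : ∀ j, x (ι j) = ι (x' j)) (hxa : x a = d) :
    Ssum x = Ssum x' + (((d:ℕ):ℤ) - ((a:ℕ):ℤ)) + 2 * (Cb a d x : ℤ) := by
  classical
  have hxd : x d = a := by rw [← hxa, hxinv]
  have hadn : (a:ℕ) < (d:ℕ) := had
  have hx'inv : ∀ j, x' (x' j) = j := by
    intro j
    apply hmono.injective
    rw [← hcomp, ← hcomp, hxinv]
  -- partition of the index set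
  have hpart : (univ : Finset (Fin (2*(n+1)))) = ({a, d} : Finset _) ∪ univ.image ι := by
    ext v
    simp only [Finset.mem_univ, true_iff, Finset.mem_union, Finset.mem_insert,
      Finset.mem_singleton, Finset.mem_image]
    by_cases hva : v = a
    · exact Or.inl (Or.inl hva)
    by_cases hvd : v = d
    · exact Or.inl (Or.inr hvd)
    obtain ⟨j, hj⟩ := iota_surj a d ι hmono havoid had v hva hvd
    exact Or.inr ⟨j, trivial, hj⟩
  have hdisj : Disjoint ({a, d} : Finset (Fin (2*(n+1)))) (univ.image ι) := by
    rw [Finset.disjoint_left]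
    intro v hv hv2
    simp only [Finset.mem_insert, Finset.mem_singleton] at hv
    simp only [Finset.mem_image] at hv2
    obtain ⟨j, _, hj⟩ := hv2
    rcases hv with rfl | rfl
    · exact (havoid j).1 hj
    · exact (havoid j).2 hj
  have key : ∀ j : Fin (2*n),
      (if (ι j:ℕ) < (x (ι j) : ℕ) then
        ((x (ι j) : ℕ) : ℤ) - ((ι j:ℕ) : ℤ) - (cterm x (ι j) : ℤ) else 0)
      = (if (j:ℕ) < (x' j : ℕ) then
          ((x' j : ℕ) : ℤ) - ((j:ℕ) : ℤ) - (cterm x' j : ℤ) else 0)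
        + ((if (ι j:ℕ) < (a:ℕ) ∧ (a:ℕ) < (ι (x' j) : ℕ) ∧ (ι (x' j) : ℕ) < (d:ℕ)
            then (1:ℤ) else 0)
          + 2 * (if (ι j:ℕ) < (a:ℕ) ∧ (d:ℕ) < (ι (x' j) : ℕ) then (1:ℤ) else 0)) := by
    intro j
    have hja : (ι j : ℕ) ≠ (a:ℕ) := fun h => (havoid j).1 (Fin.val_injective h)
    have hjd : (ι j : ℕ) ≠ (d:ℕ) := fun h => (havoid j).2 (Fin.val_injective h)
    have hxja : (ι (x' j) : ℕ) ≠ (a:ℕ) := fun h => (havoid (x' j)).1 (Fin.val_injective h)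
    have hxjd : (ι (x' j) : ℕ) ≠ (d:ℕ) := fun h => (havoid (x' j)).2 (Fin.val_injective h)
    by_cases hj : (j:ℕ) < (x' j : ℕ)
    · have hιlt : (ι j : ℕ) < (ι (x' j) : ℕ) := hmono (by exact hj)
      have hcompv : (x (ι j) : ℕ) = (ι (x' j) : ℕ) := by rw [hcomp]
      -- length part
      have hcount : (ι (x' j) : ℕ) - ((ι j : ℕ)+1)
          = ((x' j : ℕ) - ((j:ℕ)+1))
            + ((if (ι j:ℕ) < (a:ℕ) ∧ (a:ℕ) < (ι (x' j) : ℕ) then 1 else 0)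
              + (if (ι j:ℕ) < (d:ℕ) ∧ (d:ℕ) < (ι (x' j) : ℕ) then 1 else 0)) := by
        have hb := card_between (2*(n+1)) (ι j : ℕ) (ι (x' j) : ℕ) (le_of_lt (ι (x' j)).2)
        rw [card_split a d ι hmono havoid had
          (fun v => (ι j : ℕ) < (v:ℕ) ∧ (v:ℕ) < (ι (x' j) : ℕ))] at hb
        have hsm : ((univ : Finset (Fin (2*n))).filter
            fun m' => (ι j : ℕ) < (ι m' : ℕ) ∧ (ι m' : ℕ) < (ι (x' j) : ℕ)).card
            = (x' j : ℕ) - ((j:ℕ)+1) := by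
          rw [← card_between (2*n) (j:ℕ) (x' j : ℕ) (le_of_lt (x' j).2)]
          congr 1
          apply Finset.filter_congr
          intro m' _
          constructor
          · intro h
            exact ⟨hmono.lt_iff_lt.1 (by exact h.1), hmono.lt_iff_lt.1 (by exact h.2)⟩
          · intro h
            exact ⟨hmono (by exact h.1), hmono (by exact h.2)⟩
        rw [hsm] at hb
        omega
      -- crossing part
      have hct : cterm x (ι j) = cterm x' j
          + (if (ι j:ℕ) < (d:ℕ) ∧ (d:ℕ) < (ι (x' j) : ℕ) ∧ (a:ℕ) < (ι j:ℕ)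
              then 1 else 0) := by
        unfold cterm
        rw [card_split a d ι hmono havoid had
          (fun k => (ι j:ℕ) < (k:ℕ) ∧ (k:ℕ) < (x (ι j) : ℕ) ∧ (x k : ℕ) < (ι j:ℕ))]
        have hsm : ((univ : Finset (Fin (2*n))).filter
            fun m' => (ι j:ℕ) < (ι m' : ℕ) ∧ (ι m' : ℕ) < (x (ι j) : ℕ)
              ∧ (x (ι m') : ℕ) < (ι j:ℕ)).card
            = ((univ : Finset (Fin (2*n))).filter
              fun k : Fin (2*n) => (j:ℕ) < (k:ℕ) ∧ (k:ℕ) < (x' j : ℕ) ∧ (x' k : ℕ) < (j:ℕ)).card := by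
          congr 1
          apply Finset.filter_congr
          intro m' _
          rw [hcomp, hcomp]
          constructor
          · intro h
            exact ⟨hmono.lt_iff_lt.1 (by exact h.1), hmono.lt_iff_lt.1 (by exact h.2.1),
              hmono.lt_iff_lt.1 (by exact h.2.2)⟩
          · intro h
            exact ⟨hmono (by exact h.1), hmono (by exact h.2.1), hmono (by exact h.2.2)⟩
        rw [hsm, hxa, hxd, hcompv]
        have hfalse : ¬((ι j:ℕ) < (a:ℕ) ∧ (a:ℕ) < (ι (x' j) : ℕ) ∧ (d:ℕ) < (ι j:ℕ)) := by
          rintro ⟨h1, _, h3⟩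
          omega
        rw [if_neg hfalse]
        have : ((ι j:ℕ) < (d:ℕ) ∧ (d:ℕ) < (ι (x' j) : ℕ) ∧ ((a:ℕ)) < (ι j:ℕ))
            ↔ ((ι j:ℕ) < (d:ℕ) ∧ (d:ℕ) < (ι (x' j) : ℕ) ∧ (a:ℕ) < (ι j:ℕ)) := Iff.rfl
        omega
      rw [if_pos (by rw [hcompv]; exact hιlt), if_pos hj, hcompv]
      split_ifs at hcount hct ⊢ <;> omega
    · have hιge : ¬ ((ι j : ℕ) < (ι (x' j) : ℕ)) := by
        intro hc
        exact hj (hmono.lt_iff_lt.1 (by exact hc))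
      rw [if_neg (by rw [hcomp]; exact hιge), if_neg hj]
      rw [if_neg (by rintro ⟨h1, h2, h3⟩; omega), if_neg (by rintro ⟨h1, h2⟩; omega)]
      ring
  -- assemble
  have hCb : (Cb a d x : ℤ) = (((univ : Finset (Fin (2*n))).filter
      fun j => (ι j:ℕ) < (a:ℕ) ∧ (d:ℕ) < (ι (x' j) : ℕ)).card : ℤ) := by
    unfold Cb
    rw [card_split a d ι hmono havoid had
      (fun p => (p:ℕ) < (a:ℕ) ∧ (d:ℕ) < (x p : ℕ))]
    rw [if_neg (by rintro ⟨h1, _⟩; omega), if_neg (by rintro ⟨h1, _⟩; omega)]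
    have : ((univ : Finset (Fin (2*n))).filter
        fun j => (ι j:ℕ) < (a:ℕ) ∧ (d:ℕ) < (x (ι j) : ℕ))
        = (univ : Finset (Fin (2*n))).filter
          fun j => (ι j:ℕ) < (a:ℕ) ∧ (d:ℕ) < (ι (x' j) : ℕ) := by
      apply Finset.filter_congr
      intro j _
      rw [hcomp]
    rw [this]
    push_cast
    ring
  have hea : (cterm x a : ℤ) = (((univ : Finset (Fin (2*n))).filter
      fun j => (ι j:ℕ) < (a:ℕ) ∧ (a:ℕ) < (ι (x' j) : ℕ) ∧ (ι (x' j) : ℕ) < (d:ℕ)).card : ℤ) := by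
    unfold cterm
    rw [card_split a d ι hmono havoid had
      (fun k => (a:ℕ) < (k:ℕ) ∧ (k:ℕ) < (x a : ℕ) ∧ (x k : ℕ) < (a:ℕ))]
    rw [if_neg (by rintro ⟨h1, _⟩; omega), if_neg (by rw [hxa, hxd]; rintro ⟨_, h2, _⟩; omega)]
    have hbij : ((univ : Finset (Fin (2*n))).filter
        fun m => (a:ℕ) < (ι m : ℕ) ∧ (ι m : ℕ) < (x a : ℕ) ∧ (x (ι m) : ℕ) < (a:ℕ)).card
        = ((univ : Finset (Fin (2*n))).filter
          fun j => (ι j:ℕ) < (a:ℕ) ∧ (a:ℕ) < (ι (x' j) : ℕ) ∧ (ι (x' j) : ℕ) < (d:ℕ)).card := by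
      apply Finset.card_bij (fun m _ => x' m)
      · intro m hm
        simp only [mem_filter] at hm ⊢
        obtain ⟨-, h1, h2, h3⟩ := hm
        rw [hxa] at h2
        rw [hcomp] at h3
        refine ⟨Finset.mem_univ _, h3, ?_, ?_⟩
        · rw [hx'inv]; exact h1
        · rw [hx'inv]; exact h2
      · intro m _ m' _ h
        exact x'.injective h
      · intro j hj
        simp only [mem_filter] at hj
        obtain ⟨-, h1, h2, h3⟩ := hj
        refine ⟨x' j, ?_, by rw [hx'inv]⟩
        simp only [mem_filter]
        rw [hxa, hcomp, hx'inv]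
        exact ⟨Finset.mem_univ _, h2, h3, h1⟩
    rw [hbij]
    push_cast
    ring
  unfold Ssum
  rw [hpart, Finset.sum_union hdisj]
  rw [Finset.sum_insert (by simp [Fin.ne_of_lt had]), Finset.sum_singleton]
  rw [Finset.sum_image (fun x _ y _ h => hmono.injective h)]
  rw [Finset.sum_congr rfl (fun j _ => key j)]
  rw [Finset.sum_add_distrib, Finset.sum_add_distrib, ← Finset.mul_sum]
  rw [Finset.sum_boole, Finset.sum_boole]
  have hfa : (if (a:ℕ) < (x a : ℕ) then
      ((x a : ℕ) : ℤ) - ((a:ℕ) : ℤ) - (cterm x a : ℤ) else 0)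
      = ((d:ℕ) : ℤ) - ((a:ℕ) : ℤ) - (cterm x a : ℤ) := by
    rw [hxa, if_pos hadn]
  have hfd : (if (d:ℕ) < (x d : ℕ) then
      ((x d : ℕ) : ℤ) - ((d:ℕ) : ℤ) - (cterm x d : ℤ) else 0) = 0 := by
    rw [hxd, if_neg (by omega)]
  rw [hfa, hfd, hea, hCb]
  push_cast
  ring

end trans


def Tcount {N : ℕ} (d : Fin N) (x : Equiv.Perm (Fin N)) (I K₀ : ℕ) : ℕ :=
  ((univ : Finset (Fin N)).filter fun l : Fin N =>
    (l:ℕ) < I ∧ (d:ℕ) < (x l : ℕ) ∧ (x l : ℕ) < K₀).card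

def Pset {N : ℕ} (a d : Fin N) (y : Equiv.Perm (Fin N)) : Finset (Fin N) :=
  univ.filter fun p : Fin N => (p:ℕ) < (a:ℕ) ∧ (d:ℕ) < (y p : ℕ)

def BadUpTo {N : ℕ} (a d : Fin N) (x y : Equiv.Perm (Fin N)) (I₀ : ℕ) : Finset (Fin N) :=
  (Pset a d y).filter fun p =>
    ∃ I ∈ Finset.Icc ((p:ℕ)+1) I₀, ∃ K ∈ Finset.Icc ((d:ℕ)+1) ((y p : ℕ)),
      cnt x I K = cnt y I K

section bad

variable {N : ℕ} (a d : Fin N) (x y : Equiv.Perm (Fin N))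

lemma Tcount_mono_I {I I' : ℕ} (h : I ≤ I') (K₀ : ℕ) :
    Tcount d x I K₀ ≤ Tcount d x I' K₀ := by
  apply Finset.card_le_card
  intro l hl
  simp only [Tcount, mem_filter] at hl ⊢
  exact ⟨hl.1, by omega, hl.2.2⟩

lemma BadUpTo_mono {I I' : ℕ} (h : I ≤ I') : BadUpTo a d x y I ⊆ BadUpTo a d x y I' := by
  intro p hp
  simp only [BadUpTo, mem_filter] at hp ⊢
  obtain ⟨hP, I₁, hI₁, hw⟩ := hp
  simp only [Finset.mem_Icc] at hI₁
  exact ⟨hP, I₁, Finset.mem_Icc.2 ⟨hI₁.1, by omega⟩, hw⟩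

lemma bad_bound (hcnt : ∀ i k, cnt y i k ≤ cnt x i k) :
    ∀ I, I ≤ (a:ℕ) → ∀ K₀, (d:ℕ) < K₀ →
      ((BadUpTo a d x y I).filter fun p => (y p : ℕ) < K₀).card
        ≤ Tcount d x I K₀ := by
  intro I
  induction I using Nat.strong_induction_on with
  | _ I IH =>
  intro hIa K₀ hK₀
  rcases Finset.eq_empty_or_nonempty
    ((BadUpTo a d x y I).filter fun p => (y p : ℕ) < K₀) with hBB | hBB
  · rw [hBB]
    simp
  -- set of witness rows
  have hWne : ((Finset.Icc 1 I).filter fun I' =>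
      ∃ K ∈ Finset.Ioo (d:ℕ) K₀, cnt x I' K = cnt y I' K).Nonempty := by
    obtain ⟨p, hp⟩ := hBB
    simp only [mem_filter, BadUpTo] at hp
    obtain ⟨⟨hP, I₁, hI₁, K₁, hK₁, hw⟩, hyp⟩ := hp
    simp only [Finset.mem_Icc] at hI₁ hK₁
    refine ⟨I₁, ?_⟩
    simp only [mem_filter, Finset.mem_Icc]
    exact ⟨⟨by omega, hI₁.2⟩, K₁, Finset.mem_Ioo.2 ⟨by omega, by omega⟩, hw⟩
  obtain ⟨Istar, hIstarW, hIstarmax⟩ := Finset.exists_max_image _ (fun i : ℕ => i) hWne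
  simp only [mem_filter, Finset.mem_Icc] at hIstarW
  obtain ⟨⟨hIstar_pos, hIstar_le⟩, hKex⟩ := hIstarW
  have hKsetne : ((Finset.Ioo (d:ℕ) K₀).filter fun K =>
      cnt x Istar K = cnt y Istar K).Nonempty := by
    obtain ⟨K, hK, hw⟩ := hKex
    exact ⟨K, Finset.mem_filter.2 ⟨hK, hw⟩⟩
  obtain ⟨Kstar, hKstarmem, hKminimg⟩ := Finset.exists_min_image _ (fun k : ℕ => k) hKsetne
  simp only [mem_filter, Finset.mem_Ioo] at hKstarmem
  obtain ⟨⟨hdK, hKK₀⟩, heq⟩ := hKstarmem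
  have hKmin : ∀ K, (d:ℕ) < K → K < K₀ → cnt x Istar K = cnt y Istar K → Kstar ≤ K := by
    intro K h1 h2 hw
    exact hKminimg K (Finset.mem_filter.2 ⟨Finset.mem_Ioo.2 ⟨h1, h2⟩, hw⟩)
  -- reduce to Istar
  have c1 : ((BadUpTo a d x y I).filter fun p => (y p : ℕ) < K₀)
      = ((BadUpTo a d x y Istar).filter fun p => (y p : ℕ) < K₀) := by
    apply Finset.Subset.antisymm
    · intro p hp
      simp only [mem_filter, BadUpTo] at hp ⊢
      obtain ⟨⟨hP, I₁, hI₁, K₁, hK₁, hw⟩, hyp⟩ := hp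
      simp only [Finset.mem_Icc] at hI₁ hK₁
      have hle : I₁ ≤ Istar := by
        apply hIstarmax
        simp only [mem_filter, Finset.mem_Icc]
        exact ⟨⟨by omega, hI₁.2⟩, K₁, Finset.mem_Ioo.2 ⟨by omega, by omega⟩, hw⟩
      exact ⟨⟨hP, I₁, Finset.mem_Icc.2 ⟨hI₁.1, by omega⟩, K₁,
        Finset.mem_Icc.2 ⟨hK₁.1, hK₁.2⟩, hw⟩, hyp⟩
    · intro p hp
      simp only [mem_filter] at hp ⊢
      exact ⟨BadUpTo_mono a d x y hIstar_le hp.1, hp.2⟩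
  rw [c1]
  -- split at Kstar
  have hsplit := Finset.card_filter_add_card_filter_not
    (s := (BadUpTo a d x y Istar).filter fun p => (y p : ℕ) < K₀)
    (p := fun p => Kstar ≤ (y p : ℕ))
  -- the high part
  have hhigh : (((BadUpTo a d x y Istar).filter fun p => (y p : ℕ) < K₀).filter
      fun p => Kstar ≤ (y p : ℕ))
      = (univ : Finset (Fin N)).filter fun p : Fin N =>
          (p:ℕ) < Istar ∧ Kstar ≤ (y p : ℕ) ∧ (y p : ℕ) < K₀ := by
    ext p
    simp only [mem_filter, BadUpTo, Pset, Finset.mem_univ, true_and]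
    constructor
    · rintro ⟨⟨⟨hP, I₁, hI₁, K₁, hK₁, hw⟩, hyp⟩, hKs⟩
      simp only [Finset.mem_Icc] at hI₁
      exact ⟨by omega, hKs, hyp⟩
    · rintro ⟨hpI, hKs, hyp⟩
      have hPm : (p:ℕ) < (a:ℕ) ∧ (d:ℕ) < (y p : ℕ) := ⟨by omega, by omega⟩
      exact ⟨⟨⟨hPm, Istar, Finset.mem_Icc.2 ⟨by omega, le_refl _⟩,
        Kstar, Finset.mem_Icc.2 ⟨by omega, by omega⟩, heq⟩, hyp⟩, hKs⟩
  -- window counting identities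
  have wy : (((univ : Finset (Fin N)).filter fun p : Fin N =>
      (p:ℕ) < Istar ∧ Kstar ≤ (y p : ℕ) ∧ (y p : ℕ) < K₀)).card
      + cnt y Istar Kstar = cnt y Istar K₀ := by
    have h2 := Finset.card_filter_add_card_filter_not
      (s := (univ : Finset (Fin N)).filter fun l : Fin N =>
        (l:ℕ) < Istar ∧ (y l : ℕ) < K₀)
      (p := fun l => Kstar ≤ (y l : ℕ))
    rw [Finset.filter_filter, Finset.filter_filter] at h2
    have e1 : ((univ : Finset (Fin N)).filter fun l : Fin N =>
        ((l:ℕ) < Istar ∧ (y l : ℕ) < K₀) ∧ Kstar ≤ (y l : ℕ))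
        = (univ : Finset (Fin N)).filter fun p : Fin N =>
          (p:ℕ) < Istar ∧ Kstar ≤ (y p : ℕ) ∧ (y p : ℕ) < K₀ := by
      apply Finset.filter_congr; intro l _; constructor
      · rintro ⟨⟨h1, h2⟩, h3⟩; exact ⟨h1, h3, h2⟩
      · rintro ⟨h1, h2, h3⟩; exact ⟨⟨h1, h3⟩, h2⟩
    have e2 : ((univ : Finset (Fin N)).filter fun l : Fin N =>
        ((l:ℕ) < Istar ∧ (y l : ℕ) < K₀) ∧ ¬ Kstar ≤ (y l : ℕ))
        = (univ : Finset (Fin N)).filter fun l : Fin N =>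
          (l:ℕ) < Istar ∧ (y l : ℕ) < Kstar := by
      apply Finset.filter_congr; intro l _; constructor
      · rintro ⟨⟨h1, h2⟩, h3⟩; exact ⟨h1, by omega⟩
      · rintro ⟨h1, h2⟩; exact ⟨⟨h1, by omega⟩, by omega⟩
    rw [e1, e2] at h2
    unfold cnt
    omega
  have wx : Tcount d x Istar K₀ + cnt x Istar Kstar
      = Tcount d x Istar Kstar + cnt x Istar K₀ := by
    have h2 := Finset.card_filter_add_card_filter_not
      (s := (univ : Finset (Fin N)).filter fun l : Fin N =>
        (l:ℕ) < Istar ∧ (d:ℕ) < (x l : ℕ) ∧ (x l : ℕ) < K₀)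
      (p := fun l => (x l : ℕ) < Kstar)
    rw [Finset.filter_filter, Finset.filter_filter] at h2
    have e1 : ((univ : Finset (Fin N)).filter fun l : Fin N =>
        ((l:ℕ) < Istar ∧ (d:ℕ) < (x l : ℕ) ∧ (x l : ℕ) < K₀) ∧ (x l : ℕ) < Kstar)
        = (univ : Finset (Fin N)).filter fun l : Fin N =>
          (l:ℕ) < Istar ∧ (d:ℕ) < (x l : ℕ) ∧ (x l : ℕ) < Kstar := by
      apply Finset.filter_congr; intro l _; constructor
      · rintro ⟨⟨h1, h2, h3⟩, h4⟩; exact ⟨h1, h2, h4⟩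
      · rintro ⟨h1, h2, h3⟩; exact ⟨⟨h1, h2, by omega⟩, h3⟩
    have e2 : ((univ : Finset (Fin N)).filter fun l : Fin N =>
        ((l:ℕ) < Istar ∧ (d:ℕ) < (x l : ℕ) ∧ (x l : ℕ) < K₀) ∧ ¬ (x l : ℕ) < Kstar)
        = (univ : Finset (Fin N)).filter fun l : Fin N =>
          ((l:ℕ) < Istar ∧ (x l : ℕ) < K₀) ∧ ¬ (x l : ℕ) < Kstar := by
      apply Finset.filter_congr; intro l _; constructor
      · rintro ⟨⟨h1, h2, h3⟩, h4⟩; exact ⟨⟨h1, h3⟩, h4⟩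
      · rintro ⟨⟨h1, h3⟩, h4⟩; exact ⟨⟨h1, by omega, h3⟩, h4⟩
    have h3 := Finset.card_filter_add_card_filter_not
      (s := (univ : Finset (Fin N)).filter fun l : Fin N =>
        (l:ℕ) < Istar ∧ (x l : ℕ) < K₀)
      (p := fun l => (x l : ℕ) < Kstar)
    rw [Finset.filter_filter, Finset.filter_filter] at h3
    have e3 : ((univ : Finset (Fin N)).filter fun l : Fin N =>
        ((l:ℕ) < Istar ∧ (x l : ℕ) < K₀) ∧ (x l : ℕ) < Kstar)
        = (univ : Finset (Fin N)).filter fun l : Fin N =>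
          (l:ℕ) < Istar ∧ (x l : ℕ) < Kstar := by
      apply Finset.filter_congr; intro l _; constructor
      · rintro ⟨⟨h1, h2⟩, h3⟩; exact ⟨h1, h3⟩
      · rintro ⟨h1, h3⟩; exact ⟨⟨h1, by omega⟩, h3⟩
    rw [e1, e2] at h2
    rw [e3] at h3
    unfold Tcount cnt
    omega
  -- the low part
  have hlow : (((BadUpTo a d x y Istar).filter fun p => (y p : ℕ) < K₀).filter
      fun p => ¬ Kstar ≤ (y p : ℕ))
      ⊆ (BadUpTo a d x y (Istar - 1)).filter fun p => (y p : ℕ) < Kstar := by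
    intro p hp
    simp only [mem_filter, BadUpTo] at hp ⊢
    obtain ⟨⟨⟨hP, I₁, hI₁, K₁, hK₁, hw⟩, hyp⟩, hKs⟩ := hp
    simp only [Finset.mem_Icc] at hI₁ hK₁
    have hI₁ne : I₁ ≠ Istar := by
      intro hcon
      subst hcon
      have := hKmin K₁ (by omega) (by omega) hw
      omega
    exact ⟨⟨hP, I₁, Finset.mem_Icc.2 ⟨hI₁.1, by omega⟩,
      K₁, Finset.mem_Icc.2 ⟨hK₁.1, hK₁.2⟩, hw⟩, by omega⟩
  have hlowcard : (((BadUpTo a d x y Istar).filter fun p => (y p : ℕ) < K₀).filter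
      fun p => ¬ Kstar ≤ (y p : ℕ)).card ≤ Tcount d x (Istar - 1) Kstar := by
    calc _ ≤ ((BadUpTo a d x y (Istar - 1)).filter fun p => (y p : ℕ) < Kstar).card :=
          Finset.card_le_card hlow
    _ ≤ Tcount d x (Istar - 1) Kstar := IH (Istar - 1) (by omega) (by omega) Kstar hdK
  have hI1 : Tcount d x (Istar - 1) Kstar ≤ Tcount d x Istar Kstar :=
    Tcount_mono_I d x (by omega) Kstar
  have hImono : Tcount d x Istar K₀ ≤ Tcount d x I K₀ := Tcount_mono_I d x hIstar_le K₀
  have hcnt1 := hcnt Istar K₀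
  rw [hhigh] at hsplit
  omega

lemma bad_card (hcnt : ∀ i k, cnt y i k ≤ cnt x i k) :
    (BadUpTo a d x y ((a:ℕ))).card ≤ (Pset a d x).card := by
  have hb := bad_bound a d x y hcnt (a:ℕ) le_rfl N d.2
  have e : (BadUpTo a d x y ((a:ℕ))).filter (fun p => (y p : ℕ) < N)
      = BadUpTo a d x y ((a:ℕ)) := Finset.filter_true_of_mem (fun p _ => (y p).2)
  rw [e] at hb
  refine le_trans hb (Finset.card_le_card ?_)
  intro l hl
  simp only [Tcount, Pset, mem_filter, Finset.mem_univ, true_and] at hl ⊢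
  exact ⟨hl.1, hl.2.1⟩

lemma good_card (hcnt : ∀ i k, cnt y i k ≤ cnt x i k) :
    (Pset a d y).card ≤ (Pset a d x).card
      + (Pset a d y \ BadUpTo a d x y ((a:ℕ))).card := by
  have h1 := bad_card a d x y hcnt
  have h2 : BadUpTo a d x y ((a:ℕ)) ⊆ Pset a d y := Finset.filter_subset _ _
  have h3 := Finset.card_sdiff_of_subset h2
  omega

end bad

section nu

variable {N : ℕ} (a d p q : Fin N) (y : Equiv.Perm (Fin N))

lemma quad_sum (f : Fin N → ℕ) (h1 : (p:ℕ) < (a:ℕ)) (h2 : (a:ℕ) < (d:ℕ))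
    (h3 : (d:ℕ) < (q:ℕ)) :
    ∑ l ∈ ({p, a, d, q} : Finset (Fin N)), f l = f p + f a + f d + f q := by
  have hpa : p ≠ a := fun h => by subst h; omega
  have hpd : p ≠ d := fun h => by subst h; omega
  have hpq : p ≠ q := fun h => by subst h; omega
  have had' : a ≠ d := fun h => by subst h; omega
  have haq : a ≠ q := fun h => by subst h; omega
  have hdq : d ≠ q := fun h => by subst h; omega
  rw [Finset.sum_insert (by simp [hpa, hpd, hpq]),
    Finset.sum_insert (by simp [had', haq]),
    Finset.sum_insert (by simp [hdq]), Finset.sum_singleton]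
  ring

lemma cnt_nu_key (hyinv : ∀ l, y (y l) = l) (hya : y a = d) (hyp : y p = q)
    (h1 : (p:ℕ) < (a:ℕ)) (h2 : (a:ℕ) < (d:ℕ)) (h3 : (d:ℕ) < (q:ℕ)) (i k : ℕ) :
    cnt (Equiv.swap p a * y * Equiv.swap p a) i k
      + (((if (p:ℕ) < i ∧ (q:ℕ) < k then 1 else 0) + (if (a:ℕ) < i ∧ (d:ℕ) < k then 1 else 0))
        + ((if (d:ℕ) < i ∧ (a:ℕ) < k then 1 else 0) + (if (q:ℕ) < i ∧ (p:ℕ) < k then 1 else 0)))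
      = cnt y i k
        + (((if (p:ℕ) < i ∧ (d:ℕ) < k then 1 else 0) + (if (a:ℕ) < i ∧ (q:ℕ) < k then 1 else 0))
          + ((if (d:ℕ) < i ∧ (p:ℕ) < k then 1 else 0)
            + (if (q:ℕ) < i ∧ (a:ℕ) < k then 1 else 0))) := by
  classical
  have hyd : y d = a := by rw [← hya, hyinv]
  have hyq : y q = p := by rw [← hyp, hyinv]
  set ν := Equiv.swap p a * y * Equiv.swap p a with hν
  have hνp : ν p = d := by
    simp only [hν, Equiv.Perm.mul_apply, Equiv.swap_apply_left, hya]
    exact Equiv.swap_apply_of_ne_of_ne (Fin.ne_of_val_ne (by omega))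
      (Fin.ne_of_val_ne (by omega))
  have hνa : ν a = q := by
    simp only [hν, Equiv.Perm.mul_apply, Equiv.swap_apply_right, hyp]
    exact Equiv.swap_apply_of_ne_of_ne (Fin.ne_of_val_ne (by omega))
      (Fin.ne_of_val_ne (by omega))
  have hνd : ν d = p := by
    have e : Equiv.swap p a d = d := Equiv.swap_apply_of_ne_of_ne
      (Fin.ne_of_val_ne (by omega)) (Fin.ne_of_val_ne (by omega))
    simp only [hν, Equiv.Perm.mul_apply, e, hyd, Equiv.swap_apply_right]
  have hνq : ν q = a := by
    have e : Equiv.swap p a q = q := Equiv.swap_apply_of_ne_of_ne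
      (Fin.ne_of_val_ne (by omega)) (Fin.ne_of_val_ne (by omega))
    simp only [hν, Equiv.Perm.mul_apply, e, hyq, Equiv.swap_apply_left]
  have hνother : ∀ l, l ≠ p → l ≠ a → l ≠ d → l ≠ q → ν l = y l := by
    intro l hp' ha' hd' hq'
    simp only [hν, Equiv.Perm.mul_apply]
    rw [Equiv.swap_apply_of_ne_of_ne hp' ha']
    apply Equiv.swap_apply_of_ne_of_ne
    · intro h
      apply hq'
      rw [← hyinv l, h, hyp]
    · intro h
      apply hd'
      rw [← hyinv l, h, hya]
  have hquadsub : ({p, a, d, q} : Finset (Fin N)) ⊆ univ := Finset.subset_univ _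
  have hsum : ∀ z : Equiv.Perm (Fin N), cnt z i k
      = (∑ l ∈ (univ : Finset (Fin N)) \ {p, a, d, q},
          if (l:ℕ) < i ∧ (z l : ℕ) < k then 1 else 0)
        + ∑ l ∈ ({p, a, d, q} : Finset (Fin N)),
            (if (l:ℕ) < i ∧ (z l : ℕ) < k then 1 else 0) := by
    intro z
    unfold cnt
    rw [Finset.card_filter]
    exact (Finset.sum_sdiff hquadsub).symm
  have hout : (∑ l ∈ (univ : Finset (Fin N)) \ {p, a, d, q},
      if (l:ℕ) < i ∧ (ν l : ℕ) < k then 1 else 0)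
      = ∑ l ∈ (univ : Finset (Fin N)) \ {p, a, d, q},
          if (l:ℕ) < i ∧ (y l : ℕ) < k then 1 else 0 := by
    apply Finset.sum_congr rfl
    intro l hl
    simp only [Finset.mem_sdiff, Finset.mem_insert, Finset.mem_singleton] at hl
    push_neg at hl
    rw [hνother l hl.2.1 hl.2.2.1 hl.2.2.2.1 hl.2.2.2.2]
  have hqν := quad_sum a d p q (fun l => if (l:ℕ) < i ∧ (ν l : ℕ) < k then 1 else 0) h1 h2 h3
  have hqy := quad_sum a d p q (fun l => if (l:ℕ) < i ∧ (y l : ℕ) < k then 1 else 0) h1 h2 h3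
  rw [hsum ν, hsum y, hout, hqν, hqy]
  simp only [hνp, hνa, hνd, hνq, hyp, hya, hyd, hyq]
  ring

lemma nu_ge (hyinv : ∀ l, y (y l) = l) (hya : y a = d) (hyp : y p = q)
    (h1 : (p:ℕ) < (a:ℕ)) (h2 : (a:ℕ) < (d:ℕ)) (h3 : (d:ℕ) < (q:ℕ)) (i k : ℕ) :
    cnt y i k ≤ cnt (Equiv.swap p a * y * Equiv.swap p a) i k := by
  have := cnt_nu_key a d p q y hyinv hya hyp h1 h2 h3 i k
  split_ifs at this <;> omega

lemma nu_le_one (hyinv : ∀ l, y (y l) = l) (hya : y a = d) (hyp : y p = q)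
    (h1 : (p:ℕ) < (a:ℕ)) (h2 : (a:ℕ) < (d:ℕ)) (h3 : (d:ℕ) < (q:ℕ)) (i k : ℕ) :
    cnt (Equiv.swap p a * y * Equiv.swap p a) i k ≤ cnt y i k + 1 := by
  have := cnt_nu_key a d p q y hyinv hya hyp h1 h2 h3 i k
  split_ifs at this <;> omega

lemma nu_eq_outside (hyinv : ∀ l, y (y l) = l) (hya : y a = d) (hyp : y p = q)
    (h1 : (p:ℕ) < (a:ℕ)) (h2 : (a:ℕ) < (d:ℕ)) (h3 : (d:ℕ) < (q:ℕ)) (i k : ℕ)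
    (hc1 : ¬((p:ℕ) < i ∧ i ≤ (a:ℕ) ∧ (d:ℕ) < k ∧ k ≤ (q:ℕ)))
    (hc2 : ¬((d:ℕ) < i ∧ i ≤ (q:ℕ) ∧ (p:ℕ) < k ∧ k ≤ (a:ℕ))) :
    cnt (Equiv.swap p a * y * Equiv.swap p a) i k ≤ cnt y i k := by
  have := cnt_nu_key a d p q y hyinv hya hyp h1 h2 h3 i k
  split_ifs at this <;> omega

end nu

section nu2

variable {N : ℕ} (a d p q : Fin N) (x y : Equiv.Perm (Fin N))

lemma Pset_compl (z : Equiv.Perm (Fin N)) :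
    (Pset a d z).card + cnt z (a:ℕ) ((d:ℕ)+1) = min (a:ℕ) N := by
  classical
  have hsplit := Finset.card_filter_add_card_filter_not
    (s := (univ : Finset (Fin N)).filter fun p : Fin N => (p:ℕ) < (a:ℕ))
    (p := fun p => (d:ℕ) < (z p : ℕ))
  rw [Finset.filter_filter, Finset.filter_filter] at hsplit
  have e2 : ((univ : Finset (Fin N)).filter fun l : Fin N =>
      (l:ℕ) < (a:ℕ) ∧ ¬ (d:ℕ) < (z l : ℕ))
      = (univ : Finset (Fin N)).filter fun l : Fin N =>
        (l:ℕ) < (a:ℕ) ∧ (z l : ℕ) < (d:ℕ)+1 := by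
    apply Finset.filter_congr; intro l _; constructor
    · rintro ⟨u, v⟩; exact ⟨u, by omega⟩
    · rintro ⟨u, v⟩; exact ⟨u, by omega⟩
  rw [e2, card_lt_fin] at hsplit
  unfold Pset cnt
  omega

lemma Pset_le (hcnt : ∀ i k, cnt y i k ≤ cnt x i k) :
    (Pset a d x).card ≤ (Pset a d y).card := by
  have h1 := Pset_compl a d x
  have h2 := Pset_compl a d y
  have h3 := hcnt (a:ℕ) ((d:ℕ)+1)
  omega

lemma nu_vals (hyinv : ∀ l, y (y l) = l) (hya : y a = d) (hyp : y p = q)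
    (h1 : (p:ℕ) < (a:ℕ)) (h2 : (a:ℕ) < (d:ℕ)) (h3 : (d:ℕ) < (q:ℕ)) :
    ((Equiv.swap p a * y * Equiv.swap p a) p = d)
    ∧ ((Equiv.swap p a * y * Equiv.swap p a) a = q)
    ∧ ((Equiv.swap p a * y * Equiv.swap p a) d = p)
    ∧ ((Equiv.swap p a * y * Equiv.swap p a) q = a)
    ∧ ∀ l, l ≠ p → l ≠ a → l ≠ d → l ≠ q →
        (Equiv.swap p a * y * Equiv.swap p a) l = y l := by
  have hyd : y d = a := by rw [← hya, hyinv]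
  have hyq : y q = p := by rw [← hyp, hyinv]
  refine ⟨?_, ?_, ?_, ?_, ?_⟩
  · simp only [Equiv.Perm.mul_apply, Equiv.swap_apply_left, hya]
    exact Equiv.swap_apply_of_ne_of_ne (Fin.ne_of_val_ne (by omega))
      (Fin.ne_of_val_ne (by omega))
  · simp only [Equiv.Perm.mul_apply, Equiv.swap_apply_right, hyp]
    exact Equiv.swap_apply_of_ne_of_ne (Fin.ne_of_val_ne (by omega))
      (Fin.ne_of_val_ne (by omega))
  · have e : Equiv.swap p a d = d := Equiv.swap_apply_of_ne_of_ne
      (Fin.ne_of_val_ne (by omega)) (Fin.ne_of_val_ne (by omega))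
    simp only [Equiv.Perm.mul_apply, e, hyd, Equiv.swap_apply_right]
  · have e : Equiv.swap p a q = q := Equiv.swap_apply_of_ne_of_ne
      (Fin.ne_of_val_ne (by omega)) (Fin.ne_of_val_ne (by omega))
    simp only [Equiv.Perm.mul_apply, e, hyq, Equiv.swap_apply_left]
  · intro l hp' ha' hd' hq'
    simp only [Equiv.Perm.mul_apply]
    rw [Equiv.swap_apply_of_ne_of_ne hp' ha']
    apply Equiv.swap_apply_of_ne_of_ne
    · intro h
      apply hq'
      rw [← hyinv l, h, hyp]
    · intro h
      apply hd'
      rw [← hyinv l, h, hya]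

lemma nu2_eq_nu (hyinv : ∀ l, y (y l) = l) (hya : y a = d) (hyp : y p = q)
    (h1 : (p:ℕ) < (a:ℕ)) (h2 : (a:ℕ) < (d:ℕ)) (h3 : (d:ℕ) < (q:ℕ)) :
    Equiv.swap d q * y * Equiv.swap d q = Equiv.swap p a * y * Equiv.swap p a := by
  have hyd : y d = a := by rw [← hya, hyinv]
  have hyq : y q = p := by rw [← hyp, hyinv]
  obtain ⟨v1, v2, v3, v4, v5⟩ := nu_vals a d p q y hyinv hya hyp h1 h2 h3
  apply Equiv.ext
  intro l
  by_cases hp' : l = p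
  · rw [hp']
    rw [v1]
    have e : Equiv.swap d q p = p := Equiv.swap_apply_of_ne_of_ne
      (Fin.ne_of_val_ne (by omega)) (Fin.ne_of_val_ne (by omega))
    simp only [Equiv.Perm.mul_apply, e, hyp, Equiv.swap_apply_right]
  by_cases ha' : l = a
  · rw [ha']
    rw [v2]
    have e : Equiv.swap d q a = a := Equiv.swap_apply_of_ne_of_ne
      (Fin.ne_of_val_ne (by omega)) (Fin.ne_of_val_ne (by omega))
    simp only [Equiv.Perm.mul_apply, e, hya, Equiv.swap_apply_left]
  by_cases hd' : l = d
  · rw [hd']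
    rw [v3]
    simp only [Equiv.Perm.mul_apply, Equiv.swap_apply_left, hyq]
    exact Equiv.swap_apply_of_ne_of_ne (Fin.ne_of_val_ne (by omega))
      (Fin.ne_of_val_ne (by omega))
  by_cases hq' : l = q
  · rw [hq']
    rw [v4]
    simp only [Equiv.Perm.mul_apply, Equiv.swap_apply_right, hyd]
    exact Equiv.swap_apply_of_ne_of_ne (Fin.ne_of_val_ne (by omega))
      (Fin.ne_of_val_ne (by omega))
  · rw [v5 l hp' ha' hd' hq']
    simp only [Equiv.Perm.mul_apply]
    rw [Equiv.swap_apply_of_ne_of_ne hd' hq']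
    apply Equiv.swap_apply_of_ne_of_ne
    · intro h
      apply ha'
      rw [← hyinv l, h, hyd]
    · intro h
      apply hp'
      rw [← hyinv l, h, hyq]

lemma nu_inv (hyinv : ∀ l, y (y l) = l) :
    ∀ l, (Equiv.swap p a * y * Equiv.swap p a) ((Equiv.swap p a * y * Equiv.swap p a) l) = l := by
  intro l
  simp only [Equiv.Perm.mul_apply, Equiv.swap_apply_self, hyinv]

lemma nu_ne (hyinv : ∀ l, y (y l) = l) (hya : y a = d) (hyp : y p = q)
    (h1 : (p:ℕ) < (a:ℕ)) (h2 : (a:ℕ) < (d:ℕ)) (h3 : (d:ℕ) < (q:ℕ)) :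
    Equiv.swap p a * y * Equiv.swap p a ≠ y := by
  intro h
  obtain ⟨v1, -⟩ := nu_vals a d p q y hyinv hya hyp h1 h2 h3
  rw [h, hyp] at v1
  have : (q:ℕ) = (d:ℕ) := by rw [v1]
  omega

lemma nu_le_x (hyinv : ∀ l, y (y l) = l) (hxinv : ∀ l, x (x l) = l)
    (hya : y a = d) (hyp : y p = q)
    (h1 : (p:ℕ) < (a:ℕ)) (h2 : (a:ℕ) < (d:ℕ)) (h3 : (d:ℕ) < (q:ℕ))
    (hcnt : ∀ i k, cnt y i k ≤ cnt x i k)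
    (hgood : ∀ I K : ℕ, (p:ℕ) < I → I ≤ (a:ℕ) → (d:ℕ) < K → K ≤ (q:ℕ) →
      cnt y I K < cnt x I K) :
    ∀ i k, cnt (Equiv.swap p a * y * Equiv.swap p a) i k ≤ cnt x i k := by
  intro i k
  by_cases c1 : (p:ℕ) < i ∧ i ≤ (a:ℕ) ∧ (d:ℕ) < k ∧ k ≤ (q:ℕ)
  · have hg := hgood i k c1.1 c1.2.1 c1.2.2.1 c1.2.2.2
    have hb := nu_le_one a d p q y hyinv hya hyp h1 h2 h3 i k
    omega
  by_cases c2 : (d:ℕ) < i ∧ i ≤ (q:ℕ) ∧ (p:ℕ) < k ∧ k ≤ (a:ℕ)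
  · have hg := hgood k i c2.2.2.1 c2.2.2.2 c2.1 c2.2.1
    have hb := nu_le_one a d p q y hyinv hya hyp h1 h2 h3 k i
    have hs1 := cnt_symm (Equiv.swap p a * y * Equiv.swap p a)
      (nu_inv a p y hyinv) i k
    have hs2 := cnt_symm x hxinv i k
    rw [hs1, hs2]
    omega
  · have hb := nu_eq_outside a d p q y hyinv hya hyp h1 h2 h3 i k c1 c2
    exact le_trans hb (hcnt i k)

end nu2

section transdeg

variable {n : ℕ} (a d : Fin (2*(n+1))) (ι : Fin (2*n) → Fin (2*(n+1)))

lemma swap_iota (hmono : StrictMono ι) (j1 j2 j : Fin (2*n)) :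
    Equiv.swap (ι j1) (ι j2) (ι j) = ι (Equiv.swap j1 j2 j) := by
  by_cases h1 : j = j1
  · subst h1
    rw [Equiv.swap_apply_left, Equiv.swap_apply_left]
  by_cases h2 : j = j2
  · subst h2
    rw [Equiv.swap_apply_right, Equiv.swap_apply_right]
  · rw [Equiv.swap_apply_of_ne_of_ne (fun h => h1 (hmono.injective h))
      (fun h => h2 (hmono.injective h)),
      Equiv.swap_apply_of_ne_of_ne h1 h2]

lemma deg_ge (hmono : StrictMono ι) (havoid : ∀ j, ι j ≠ a ∧ ι j ≠ d) (had : a < d)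
    (π μ : Equiv.Perm (Fin (2*(n+1)))) (π' μ' : Equiv.Perm (Fin (2*n)))
    (hπinv : ∀ l, π (π l) = l) (hμinv : ∀ l, μ (μ l) = l)
    (hπdel : ∀ j, π (ι j) = ι (π' j)) (hμdel : ∀ j, μ (ι j) = ι (μ' j))
    (hπa : π a = d) (hμa : μ a = d)
    (hcnt : ∀ i k, cnt μ i k ≤ cnt π i k) :
    deg μ' π' + 2 * ((Pset a d μ \ BadUpTo a d π μ ((a:ℕ))).card) ≤ deg μ π := by
  classical
  have hadn : (a:ℕ) < (d:ℕ) := had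
  have hμd : μ d = a := by rw [← hμa, hμinv]
  have hπd : π d = a := by rw [← hπa, hπinv]
  set G := Pset a d μ \ BadUpTo a d π μ ((a:ℕ)) with hG
  have hGmem : ∀ p ∈ G, ((p:ℕ) < (a:ℕ) ∧ (d:ℕ) < (μ p : ℕ))
      ∧ ∀ I K : ℕ, (p:ℕ) < I → I ≤ (a:ℕ) → (d:ℕ) < K → K ≤ (μ p : ℕ) →
        cnt μ I K < cnt π I K := by
    intro p hp
    rw [hG, Finset.mem_sdiff] at hp
    obtain ⟨hP, hnb⟩ := hp
    have hP' := hP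
    simp only [Pset, mem_filter, Finset.mem_univ, true_and] at hP'
    refine ⟨hP', ?_⟩
    intro I K h1 h2 h3 h4
    have hne : cnt π I K ≠ cnt μ I K := by
      intro he
      apply hnb
      simp only [BadUpTo, mem_filter]
      exact ⟨hP, I, Finset.mem_Icc.2 ⟨by omega, h2⟩, K, Finset.mem_Icc.2 ⟨by omega, h4⟩, he⟩
    have := hcnt I K
    omega
  set F := (univ.filter fun pr : Fin (2*(n+1)) × Fin (2*(n+1)) => pr.1 < pr.2 ∧
    Equiv.swap pr.1 pr.2 * μ * Equiv.swap pr.1 pr.2 ≠ μ ∧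
    revLE μ (Equiv.swap pr.1 pr.2 * μ * Equiv.swap pr.1 pr.2) ∧
    revLE (Equiv.swap pr.1 pr.2 * μ * Equiv.swap pr.1 pr.2) π) with hF
  have hdegF : deg μ π = F.card := rfl
  set S1 := (univ.filter fun pr : Fin (2*n) × Fin (2*n) => pr.1 < pr.2 ∧
    Equiv.swap pr.1 pr.2 * μ' * Equiv.swap pr.1 pr.2 ≠ μ' ∧
    revLE μ' (Equiv.swap pr.1 pr.2 * μ' * Equiv.swap pr.1 pr.2) ∧
    revLE (Equiv.swap pr.1 pr.2 * μ' * Equiv.swap pr.1 pr.2) π').image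
      (fun pr => (ι pr.1, ι pr.2)) with hS1
  set S2 := G.image (fun p => (p, a)) with hS2
  set S3 := G.image (fun p => (d, μ p)) with hS3
  have hS1sub : S1 ⊆ F := by
    intro pr hpr
    rw [hS1, Finset.mem_image] at hpr
    obtain ⟨⟨j1, j2⟩, hcond, rfl⟩ := hpr
    simp only [mem_filter, Finset.mem_univ, true_and] at hcond
    obtain ⟨hlt, hne, hle1, hle2⟩ := hcond
    have hνcomp : ∀ j, (Equiv.swap (ι j1) (ι j2) * μ * Equiv.swap (ι j1) (ι j2)) (ι j)
        = ι ((Equiv.swap j1 j2 * μ' * Equiv.swap j1 j2) j) := by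
      intro j
      simp only [Equiv.Perm.mul_apply]
      rw [swap_iota ι hmono, hμdel, swap_iota ι hmono]
    have hfixa : Equiv.swap (ι j1) (ι j2) a = a :=
      Equiv.swap_apply_of_ne_of_ne (Ne.symm (havoid j1).1) (Ne.symm (havoid j2).1)
    have hfixd : Equiv.swap (ι j1) (ι j2) d = d :=
      Equiv.swap_apply_of_ne_of_ne (Ne.symm (havoid j1).2) (Ne.symm (havoid j2).2)
    have hνa : (Equiv.swap (ι j1) (ι j2) * μ * Equiv.swap (ι j1) (ι j2)) a = d := by
      simp only [Equiv.Perm.mul_apply, hfixa, hμa, hfixd]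
    have hνd : (Equiv.swap (ι j1) (ι j2) * μ * Equiv.swap (ι j1) (ι j2)) d = a := by
      simp only [Equiv.Perm.mul_apply, hfixd, hμd, hfixa]
    rw [hF]
    simp only [mem_filter, Finset.mem_univ, true_and]
    refine ⟨hmono hlt, ?_, ?_, ?_⟩
    · intro hcon
      apply hne
      apply Equiv.ext
      intro j
      apply hmono.injective
      rw [← hνcomp, hcon, hμdel]
    · show bruhatLE _ μ
      rw [bruhat_transfer a d ι hmono havoid had _ μ _ μ' hνcomp hνa hνd hμdel hμa hμd]
      exact hle1
    · show bruhatLE π _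
      rw [bruhat_transfer a d ι hmono havoid had π _ π' _ hπdel hπa hπd hνcomp hνa hνd]
      exact hle2
  have hS2sub : S2 ⊆ F := by
    intro pr hpr
    rw [hS2, Finset.mem_image] at hpr
    obtain ⟨p, hp, rfl⟩ := hpr
    obtain ⟨⟨hpa, hpq⟩, hgood⟩ := hGmem p hp
    rw [hF]
    simp only [mem_filter, Finset.mem_univ, true_and]
    refine ⟨Fin.lt_def.2 hpa, ?_, ?_, ?_⟩
    · exact nu_ne a d p (μ p) μ hμinv hμa rfl hpa hadn hpq
    · show bruhatLE _ μ
      rw [bruhat_iff_cnt]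
      intro i k
      exact nu_ge a d p (μ p) μ hμinv hμa rfl hpa hadn hpq i k
    · show bruhatLE π _
      rw [bruhat_iff_cnt]
      intro i k
      exact nu_le_x a d p (μ p) π μ hμinv hπinv hμa rfl hpa hadn hpq hcnt hgood i k
  have hS3sub : S3 ⊆ F := by
    intro pr hpr
    rw [hS3, Finset.mem_image] at hpr
    obtain ⟨p, hp, rfl⟩ := hpr
    obtain ⟨⟨hpa, hpq⟩, hgood⟩ := hGmem p hp
    rw [hF]
    simp only [mem_filter, Finset.mem_univ, true_and]
    have hswap := nu2_eq_nu a d p (μ p) μ hμinv hμa rfl hpa hadn hpq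
    rw [hswap]
    refine ⟨Fin.lt_def.2 hpq, ?_, ?_, ?_⟩
    · exact nu_ne a d p (μ p) μ hμinv hμa rfl hpa hadn hpq
    · show bruhatLE _ μ
      rw [bruhat_iff_cnt]
      intro i k
      exact nu_ge a d p (μ p) μ hμinv hμa rfl hpa hadn hpq i k
    · show bruhatLE π _
      rw [bruhat_iff_cnt]
      intro i k
      exact nu_le_x a d p (μ p) π μ hμinv hπinv hμa rfl hpa hadn hpq hcnt hgood i k
  have hd12 : Disjoint S1 S2 := by
    rw [Finset.disjoint_left]
    intro pr h1 h2
    rw [hS1, Finset.mem_image] at h1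
    rw [hS2, Finset.mem_image] at h2
    obtain ⟨⟨j1, j2⟩, _, hpr1⟩ := h1
    obtain ⟨p, _, hpr2⟩ := h2
    apply (havoid j2).1
    rw [show ι j2 = pr.2 from congrArg Prod.snd hpr1, show pr.2 = a from (congrArg Prod.snd hpr2).symm]
  have hd13 : Disjoint S1 S3 := by
    rw [Finset.disjoint_left]
    intro pr h1 h2
    rw [hS1, Finset.mem_image] at h1
    rw [hS3, Finset.mem_image] at h2
    obtain ⟨⟨j1, j2⟩, _, hpr1⟩ := h1
    obtain ⟨p, _, hpr2⟩ := h2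
    apply (havoid j1).2
    rw [show ι j1 = pr.1 from congrArg Prod.fst hpr1, show pr.1 = d from (congrArg Prod.fst hpr2).symm]
  have hd23 : Disjoint S2 S3 := by
    rw [Finset.disjoint_left]
    intro pr h1 h2
    rw [hS2, Finset.mem_image] at h1
    rw [hS3, Finset.mem_image] at h2
    obtain ⟨p, hp, hpr1⟩ := h1
    obtain ⟨p2, hp2, hpr2⟩ := h2
    obtain ⟨⟨-, hpq2⟩, -⟩ := hGmem p2 hp2
    have ha2 : a = μ p2 := by
      rw [show a = pr.2 from congrArg Prod.snd hpr1,
        show pr.2 = μ p2 from (congrArg Prod.snd hpr2).symm]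
    have : (a:ℕ) = (μ p2 : ℕ) := by rw [← ha2]
    omega
  have hc1 : S1.card = deg μ' π' := by
    rw [hS1]
    rw [Finset.card_image_of_injective _ (fun pr1 pr2 h => by
      have h1 := congrArg Prod.fst h
      have h2 := congrArg Prod.snd h
      simp only at h1 h2
      exact Prod.ext (hmono.injective h1) (hmono.injective h2))]
    rfl
  have hc2 : S2.card = G.card := by
    rw [hS2]
    exact Finset.card_image_of_injective _ (fun p1 p2 h => by
      exact congrArg Prod.fst h)
  have hc3 : S3.card = G.card := by
    rw [hS3]
    exact Finset.card_image_of_injective _ (fun p1 p2 h => by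
      exact μ.injective (congrArg Prod.snd h))
  have hunion : (S1 ∪ S2 ∪ S3).card = S1.card + S2.card + S3.card := by
    rw [Finset.card_union_of_disjoint (by
      rw [Finset.disjoint_union_left]
      exact ⟨hd13, hd23⟩)]
    rw [Finset.card_union_of_disjoint hd12]
  have hsub : S1 ∪ S2 ∪ S3 ⊆ F := by
    intro pr hpr
    rcases Finset.mem_union.1 hpr with h | h
    · rcases Finset.mem_union.1 h with h' | h'
      · exact hS1sub h'
      · exact hS2sub h'
    · exact hS3sub h
  have := Finset.card_le_card hsub
  rw [hunion, hc1, hc2, hc3] at this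
  rw [hdegF]
  omega


end transdeg

end Stmt9

open Stmt9

/-- If after deleting a commonly flipped pair a < d the vertex μ' is irregular in
BG_{μ',π'}, then μ is irregular in BG_{μ,π}. -/
theorem stmt_9 (n : ℕ) (π μ : Equiv.Perm (Fin (2*(n+1))))
    (hπinv : ∀ i, π (π i) = i) (hπfpf : ∀ i, π i ≠ i)
    (hμinv : ∀ i, μ (μ i) = i) (hμfpf : ∀ i, μ i ≠ i)
    (hle : revLE μ π)
    (a d : Fin (2*(n+1))) (had : a < d) (hπad : π a = d) (hμad : μ a = d)
    (π' μ' : Equiv.Perm (Fin (2*n)))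
    (hπ'inv : ∀ i, π' (π' i) = i) (hπ'fpf : ∀ i, π' i ≠ i)
    (hμ'inv : ∀ i, μ' (μ' i) = i) (hμ'fpf : ∀ i, μ' i ≠ i)
    (ι : Fin (2*n) → Fin (2*(n+1))) (hmono : StrictMono ι)
    (havoid : ∀ j, ι j ≠ a ∧ ι j ≠ d)
    (hπdel : ∀ j, π (ι j) = ι (π' j)) (hμdel : ∀ j, μ (ι j) = ι (μ' j)) :
    rk n π' - rk n μ' < (deg μ' π' : ℤ) →
    rk (n+1) π - rk (n+1) μ < (deg μ π : ℤ) := by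
  intro hsmall
  have hcnt : ∀ i k, cnt μ i k ≤ cnt π i k := (bruhat_iff_cnt π μ).1 hle
  have hSπ := Ssum_delete a d ι hmono havoid had π π' hπinv hπdel hπad
  have hSμ := Ssum_delete a d ι hmono havoid had μ μ' hμinv hμdel hμad
  have hdeg := deg_ge a d ι hmono havoid had π μ π' μ' hπinv hμinv hπdel hμdel hπad hμad hcnt
  have hgc := good_card a d π μ hcnt
  have hrkπ : rk (n+1) π = (((n+1) : ℕ):ℤ)^2 - Ssum π := rfl
  have hrkμ : rk (n+1) μ = (((n+1) : ℕ):ℤ)^2 - Ssum μ := rfl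
  have hrkπ' : rk n π' = ((n : ℕ):ℤ)^2 - Ssum π' := rfl
  have hrkμ' : rk n μ' = ((n : ℕ):ℤ)^2 - Ssum μ' := rfl
  have hCbπ : Cb a d π = (Pset a d π).card := rfl
  have hCbμ : Cb a d μ = (Pset a d μ).card := rfl
  rw [hCbπ] at hSπ
  rw [hCbμ] at hSμ
  rw [hrkπ', hrkμ'] at hsmall
  rw [hrkπ, hrkμ]
  omega
end
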